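/- For every positive integer j, μ(j) := min{k ≥ 2j−1 : (2j−1)!·(2j−1) divides k!} satisfies μ(j) ≤ 4j−2, with equality if and only if 2j−1 is a prime number. -/

import Mathlib

open Nat

lemma prime_lb {p k : ℕ} (hp : p.Prime) (hk1 : p ≤ k) (hk2 : k < 2 * p) :
    ¬ (p.factorial * p ∣ k.factorial) := by
  intro h
  have hpp : p ^ 2 ∣ k.factorial := by
    have : p * p ∣ p.factorial * p :=
      Nat.mul_dvd_mul (Nat.dvd_factorial hp.pos le_rfl) dvd_rfl
    exact (pow_two p) ▸ this.trans h
  have hb : Nat.log p k < 2 := by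
    rw [Nat.log_lt_iff_lt_pow hp.one_lt (by omega)]
    nlinarith [hp.two_le]
  rw [Nat.Prime.pow_dvd_factorial_iff hp hb] at hpp
  have he : ∑ i ∈ Finset.Ico 1 2, k / p ^ i = k / p := by simp
  rw [he] at hpp
  have h2 := Nat.div_lt_of_lt_mul (by omega : k < p * 2)
  omega

lemma comp_dvd {n : ℕ} (hodd : Odd n) (hnp : ¬ n.Prime) : n ∣ (n - 1).factorial := by
  rcases eq_or_lt_of_le (Nat.one_le_of_lt hodd.pos) with h1 | h1
  · simp [← h1]
  set a := n.minFac with ha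
  have hap : a.Prime := Nat.minFac_prime (by omega)
  have had : a ∣ n := Nat.minFac_dvd n
  have ha2 : 2 ≤ a := hap.two_le
  have hane2 : a ≠ 2 := by
    intro h
    exact (Nat.not_even_iff_odd.symm.mp hodd) ((even_iff_two_dvd).mpr (h ▸ had))
  have ha3 : 3 ≤ a := by omega
  obtain ⟨b, hb⟩ := had
  have hbne1 : b ≠ 1 := by
    intro h; rw [h, mul_one] at hb; exact hnp (hb ▸ hap)
  have hbne0 : b ≠ 0 := by intro h; rw [h, mul_zero] at hb; omega
  have hble : a ≤ b := Nat.minFac_le_of_dvd (by omega) ⟨a, by rw [hb]; ring⟩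
  have hbn : b < n := by nlinarith
  rcases lt_or_eq_of_le hble with hab | hab
  · have h1 : a ∣ (b - 1).factorial := Nat.dvd_factorial (by omega) (by omega)
    have h2 : a * b ∣ b.factorial := by
      have : b.factorial = b * (b - 1).factorial := by
        conv_lhs => rw [show b = (b - 1) + 1 by omega]
        rw [Nat.factorial_succ]; congr 1; omega
      rw [this, mul_comm a b]
      exact Nat.mul_dvd_mul dvd_rfl h1
    exact hb ▸ h2.trans (Nat.factorial_dvd_factorial (by omega))
  · subst hab
    have h2a : a * (2 * a) ∣ (2 * a).factorial := by
      have : (2 * a).factorial = (2 * a) * (2 * a - 1).factorial := by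
        conv_lhs => rw [show 2 * a = (2 * a - 1) + 1 by omega]
        rw [Nat.factorial_succ]; congr 1; omega
      rw [this, mul_comm]
      exact Nat.mul_dvd_mul dvd_rfl (Nat.dvd_factorial (by omega) (by omega))
    have hle : 2 * a ≤ n - 1 := by
      have : 2 * a + 1 ≤ a * a := by nlinarith
      omega
    have hfin := h2a.trans (Nat.factorial_dvd_factorial hle)
    calc n ∣ a * (2 * a) := by rw [hb]; exact Dvd.intro 2 (by ring)
    _ ∣ (n - 1).factorial := hfin

/-- `μ(j)`: least `k ≥ 2j−1` with `(2j−1)!·(2j−1) ∣ k!`. -/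
noncomputable def mu (j : ℕ) : ℕ :=
  sInf {k : ℕ | 2 * j - 1 ≤ k ∧ (Nat.factorial (2 * j - 1) * (2 * j - 1)) ∣ Nat.factorial k}

theorem stmt_12 (j : ℕ) (hj : 1 ≤ j) :
    mu j ≤ 4 * j - 2 ∧ (mu j = 4 * j - 2 ↔ Nat.Prime (2 * j - 1)) := by
  set n := 2 * j - 1 with hn
  have hn1 : 1 ≤ n := by omega
  have h4 : 4 * j - 2 = 2 * n := by omega
  have hodd : Odd n := ⟨j - 1, by omega⟩
  have hmu : mu j = sInf {k : ℕ | n ≤ k ∧ n.factorial * n ∣ k.factorial} := rfl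
  -- factorial expansion helper
  have hfact : ∀ m : ℕ, 1 ≤ m → m.factorial = m * (m - 1).factorial := by
    intro m hm
    conv_lhs => rw [show m = (m - 1) + 1 by omega]
    rw [Nat.factorial_succ]; congr 1; omega
  -- 2n is in the set
  have hmem : 2 * n ∈ {k : ℕ | n ≤ k ∧ n.factorial * n ∣ k.factorial} := by
    refine ⟨by omega, ?_⟩
    rw [hfact (2 * n) (by omega)]
    rw [mul_comm (2 * n)]
    exact Nat.mul_dvd_mul (Nat.factorial_dvd_factorial (by omega)) ⟨2, by ring⟩
  have hub : mu j ≤ 2 * n := hmu ▸ Nat.sInf_le hmem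
  refine ⟨by omega, ?_, ?_⟩
  · -- mu = 2n → prime, contrapositive
    intro heq
    by_contra hnp
    have hmem' : 2 * n - 1 ∈ {k : ℕ | n ≤ k ∧ n.factorial * n ∣ k.factorial} := by
      refine ⟨by omega, ?_⟩
      have h1 : n.factorial * n ∣ n.factorial * (n - 1).factorial :=
        Nat.mul_dvd_mul dvd_rfl (comp_dvd hodd hnp)
      have h2 : n.factorial * (n - 1).factorial ∣ (n + (n - 1)).factorial :=
        Nat.factorial_mul_factorial_dvd_factorial_add n (n - 1)
      have h3 : n + (n - 1) = 2 * n - 1 := by omega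
      exact h1.trans (h3 ▸ h2)
    have := hmu ▸ Nat.sInf_le hmem'
    omega
  · -- prime → mu = 2n
    intro hp
    have hne : {k : ℕ | n ≤ k ∧ n.factorial * n ∣ k.factorial}.Nonempty := ⟨2 * n, hmem⟩
    have hmumem := hmu ▸ Nat.sInf_mem hne
    obtain ⟨hm1, hm2⟩ := hmumem
    by_contra hne2
    have hlt : mu j < 2 * n := by omega
    exact prime_lb hp hm1 hlt hm2
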